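/- arXiv:2309.14344 — 2 statements merged into one kernel-verified Lean document; each statement's English description precedes it below -/
import Mathlib

section
/- Let A_1,...,A_k be matrices whose span is closed under commutators (i.e., [A_i,A_j] = Σ_l c_{ij}^l A_l for some constants c_{ij}^l). Then the subspace T = ⋂_{i,j} ker [A_i, A_j] is invariant under each A_s: A_s T ⊆ T. -/
theorem stmt_1 {K : Type*} [Field K] {n k : ℕ}
    (A : Fin k → Matrix (Fin n) (Fin n) K)
    (hLie : ∀ i j, ∃ c : Fin k → K,
      A i * A j - A j * A i = ∑ l, c l • A l) :
    ∀ s, ∀ v : Fin n → K,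
      (∀ i j, (A i * A j - A j * A i).mulVec v = 0) →
      (∀ i j, (A i * A j - A j * A i).mulVec ((A s).mulVec v) = 0) := by
  intro s v hv i j
  obtain ⟨c, hc⟩ := hLie i j
  have hsum : ∑ l, c l • (A l * A s - A s * A l)
      = (∑ l, c l • A l) * A s - A s * (∑ l, c l • A l) := by
    rw [Finset.sum_mul, Finset.mul_sum, ← Finset.sum_sub_distrib]
    simp [smul_sub, smul_mul_assoc, mul_smul_comm]
  have key : (A i * A j - A j * A i) * A s
      = A s * (A i * A j - A j * A i) + ∑ l, c l • (A l * A s - A s * A l) := by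
    rw [hsum, ← hc]
    noncomm_ring
  rw [Matrix.mulVec_mulVec, key, Matrix.add_mulVec, ← Matrix.mulVec_mulVec, hv i j,
    Matrix.mulVec_zero]
  have hs : (∑ l, c l • (A l * A s - A s * A l)).mulVec v
      = ∑ l, c l • ((A l * A s - A s * A l).mulVec v) := by
    funext x
    simp only [Matrix.mulVec, dotProduct, Finset.sum_apply, Pi.smul_apply,
      Matrix.smul_apply, Matrix.sum_apply, Finset.sum_mul, smul_eq_mul, Finset.mul_sum, mul_assoc]
    rw [Finset.sum_comm]
  rw [hs]
  simp [hv]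
end

section
/- A common eigenvector of matrices A_1,...,A_k spanning a Lie algebra exists if and only if the matrices restricted to T = ⋂_{i,j} ker[A_i,A_j] have a common eigenvector in T; in particular over an algebraically closed field, a common eigenvector exists if and only if T ≠ 0. -/
open Module

lemma aux_common_eigenvector {K : Type*} [Field K] [IsAlgClosed K] :
    ∀ (m : ℕ) {V : Type*} [AddCommGroup V] [Module K V] [FiniteDimensional K V]
      [Nontrivial V] (f : Fin m → Module.End K V),
      (∀ i j, ∀ x : V, f i (f j x) = f j (f i x)) →
      ∃ v : V, v ≠ 0 ∧ ∀ i, ∃ lam : K, f i v = lam • v := by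
  intro m
  induction m with
  | zero =>
    intro V _ _ _ _ f _
    obtain ⟨v, hv⟩ := exists_ne (0 : V)
    exact ⟨v, hv, fun i => i.elim0⟩
  | succ m ih =>
    intro V _ _ _ _ f hcomm
    obtain ⟨μ, hμ⟩ := Module.End.exists_eigenvalue (f (Fin.last m))
    set W := (f (Fin.last m)).eigenspace μ with hWdef
    have hWbot : W ≠ ⊥ := hμ
    have hWnt : Nontrivial W := Submodule.nontrivial_iff_ne_bot.mpr hWbot
    have hmap : ∀ i : Fin m, Set.MapsTo (f i.castSucc) W W := by
      intro i x hx
      simp only [SetLike.mem_coe] at hx ⊢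
      rw [hWdef, Module.End.mem_eigenspace_iff] at hx ⊢
      rw [← hcomm, hx, map_smul]
    let g : Fin m → Module.End K W := fun i => (f i.castSucc).restrict (hmap i)
    have hgcomm : ∀ i j, ∀ x : W, g i (g j x) = g j (g i x) := by
      intro i j x
      apply Subtype.ext
      exact hcomm i.castSucc j.castSucc x
    obtain ⟨v, hv0, hv⟩ := ih g hgcomm
    refine ⟨(v : V), by simpa using hv0, ?_⟩
    intro i
    refine Fin.lastCases ?_ ?_ i
    · exact ⟨μ, Module.End.mem_eigenspace_iff.mp v.2⟩
    · intro i
      obtain ⟨lam, hlam⟩ := hv i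
      refine ⟨lam, ?_⟩
      have := congrArg Subtype.val hlam
      exact this

theorem stmt_6 {K : Type*} [Field K] [IsAlgClosed K] {n k : ℕ}
    (A : Fin k → Matrix (Fin n) (Fin n) K)
    (hLie : ∀ i j, ∃ c : Fin k → K,
      A i * A j - A j * A i = ∑ l, c l • A l) :
    ((∃ v : Fin n → K, v ≠ 0 ∧ ∀ i, ∃ lam : K, (A i).mulVec v = lam • v) ↔
      (∃ v : Fin n → K, v ≠ 0 ∧ (∀ i j, (A i * A j - A j * A i).mulVec v = 0) ∧
        ∀ i, ∃ lam : K, (A i).mulVec v = lam • v)) ∧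
    ((∃ v : Fin n → K, v ≠ 0 ∧ ∀ i, ∃ lam : K, (A i).mulVec v = lam • v) ↔
      (∃ v : Fin n → K, v ≠ 0 ∧ ∀ i j, (A i * A j - A j * A i).mulVec v = 0)) := by
  -- a common eigenvector is killed by all brackets
  have key : ∀ v : Fin n → K, (∀ i, ∃ lam : K, (A i).mulVec v = lam • v) →
      ∀ i j, (A i * A j - A j * A i).mulVec v = 0 := by
    intro v hv i j
    obtain ⟨a, ha⟩ := hv i
    obtain ⟨b, hb⟩ := hv j
    rw [Matrix.sub_mulVec, ← Matrix.mulVec_mulVec, ← Matrix.mulVec_mulVec, ha, hb,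
      Matrix.mulVec_smul, Matrix.mulVec_smul, ha, hb, smul_comm, sub_self]
  -- the hard direction
  have hard : (∃ v : Fin n → K, v ≠ 0 ∧ ∀ i j, (A i * A j - A j * A i).mulVec v = 0) →
      ∃ v : Fin n → K, v ≠ 0 ∧ ∀ i, ∃ lam : K, (A i).mulVec v = lam • v := by
    rintro ⟨v0, hv0ne, hv0⟩
    set T : Submodule K (Fin n → K) :=
      ⨅ i, ⨅ j, LinearMap.ker (A i * A j - A j * A i).mulVecLin with hTdef
    have memT : ∀ x : Fin n → K, x ∈ T ↔ ∀ i j, (A i * A j - A j * A i).mulVec x = 0 := by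
      intro x
      simp [hTdef, Submodule.mem_iInf, LinearMap.mem_ker, Matrix.mulVecLin_apply, Matrix.sub_mulVec]
    have hv0T : v0 ∈ T := (memT v0).mpr hv0
    have hTnt : Nontrivial T := by
      refine ⟨⟨v0, hv0T⟩, 0, ?_⟩
      simp [Subtype.ext_iff, hv0ne]
    -- T is invariant under each A l
    have hmap : ∀ l : Fin k, Set.MapsTo (A l).mulVecLin T T := by
      intro l x hx
      simp only [SetLike.mem_coe] at hx ⊢
      rw [memT] at hx
      rw [memT]
      simp only [Matrix.mulVecLin_apply]
      intro i j
      obtain ⟨c, hc⟩ := hLie i j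
      have h1 : (A i * A j - A j * A i) * A l - A l * (A i * A j - A j * A i)
          = ∑ m, c m • (A m * A l - A l * A m) := by
        rw [hc, Finset.sum_mul, Finset.mul_sum, ← Finset.sum_sub_distrib]
        simp [smul_mul_assoc, mul_smul_comm, smul_sub]
      have hsum : ∀ (M : Fin k → Matrix (Fin n) (Fin n) K),
          (∑ m, M m).mulVec x = ∑ m, (M m).mulVec x := by
        intro M
        induction (Finset.univ : Finset (Fin k)) using Finset.induction with
        | empty => simp [Matrix.mulVec_zero]
        | insert hnew ihs => simp_all [Matrix.add_mulVec]
      have h2 := congrArg (fun M => Matrix.mulVec M x) h1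
      simp only [Matrix.sub_mulVec] at h2 ⊢
      have h3 : ∀ m, ((c m • (A m * A l - A l * A m)).mulVec x) = 0 := by
        intro m
        rw [Matrix.smul_mulVec, hx m l, smul_zero]
      rw [hsum] at h2
      rw [Finset.sum_eq_zero (fun m _ => h3 m)] at h2
      have h4 : (A l * (A i * A j - A j * A i)).mulVec x = 0 := by
        rw [← Matrix.mulVec_mulVec, hx i j, Matrix.mulVec_zero]
      rw [h4, sub_zero] at h2
      rw [← Matrix.sub_mulVec, Matrix.mulVec_mulVec]
      exact h2
    -- restrict to T, apply the commuting-family lemma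
    let g : Fin k → Module.End K T := fun l => ((A l).mulVecLin).restrict (hmap l)
    have hgcomm : ∀ i j, ∀ x : T, g i (g j x) = g j (g i x) := by
      intro i j x
      apply Subtype.ext
      have hx := ((memT x).mp x.2) i j
      rw [Matrix.sub_mulVec, sub_eq_zero, ← Matrix.mulVec_mulVec, ← Matrix.mulVec_mulVec] at hx
      exact hx
    obtain ⟨w, hw0, hw⟩ := aux_common_eigenvector k g hgcomm
    refine ⟨(w : Fin n → K), by simpa using hw0, ?_⟩
    intro i
    obtain ⟨lam, hlam⟩ := hw i
    refine ⟨lam, ?_⟩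
    have := congrArg Subtype.val hlam
    exact this
  constructor
  · constructor
    · rintro ⟨v, hv0, hv⟩
      exact ⟨v, hv0, key v hv, hv⟩
    · rintro ⟨v, hv0, _, hv⟩
      exact ⟨v, hv0, hv⟩
  · constructor
    · rintro ⟨v, hv0, hv⟩
      exact ⟨v, hv0, key v hv⟩
    · exact hard
end
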